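/- Suppose a connected 3-regular geodesic net on the doubled regular n-gon has faces F₁, …, F_k, where face i has yᵢ ≥ 1 edges and encloses xᵢ ≥ 0 cone points, with Σxᵢ = n and for each i: (4π/n)xᵢ + (π/3)yᵢ = 2π. Then at least one face has xᵢ > 0, and for that face n(6 − yᵢ) = 12xᵢ with yᵢ ≤ 5, hence 3 ∣ n or 4 ∣ n. -/
import Mathlib


open Real

/-- For a connected 3-regular geodesic net on the doubled regular `n`-gon with faces
`F₁, …, F_k`, where face `i` has `yᵢ ≥ 1` edges and encloses `xᵢ ≥ 0` cone points with
`Σ xᵢ = n` and Gauss–Bonnet `(4π/n)xᵢ + (π/3)yᵢ = 2π`: some face has `xᵢ > 0`, that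
face satisfies `yᵢ ≤ 5` and `n(6 − yᵢ) = 12xᵢ`, and `3 ∣ n` or `4 ∣ n`. -/
theorem three_regular_net_restriction
    (n k : ℕ) (hn : 0 < n) (x y : Fin k → ℕ)
    (hy : ∀ i, 1 ≤ y i)
    (hsum : ∑ i, x i = n)
    (hGB : ∀ i, (4 * π / n) * (x i) + (π / 3) * (y i) = 2 * π) :
    (∃ i, 0 < x i ∧ y i ≤ 5 ∧ n * (6 - y i) = 12 * x i) ∧ (3 ∣ n ∨ 4 ∣ n) := by
  have hn' : (n : ℝ) ≠ 0 := Nat.cast_ne_zero.mpr hn.ne'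
  have key : ∀ i, 12 * x i + n * y i = 6 * n := by
    intro i
    have h := hGB i
    have hπ := pi_pos
    have hr : (12 * x i + n * y i : ℝ) = 6 * n := by
      field_simp at h
      nlinarith [h]
    exact_mod_cast hr
  have hex : ∃ i, 0 < x i := by
    by_contra hcon
    push_neg at hcon
    have : ∑ i, x i = 0 := Finset.sum_eq_zero fun i _ => Nat.le_zero.mp (hcon i)
    omega
  obtain ⟨i, hxi⟩ := hex
  have h1 := key i
  have hyi1 := hy i
  have hy5 : y i ≤ 5 := by nlinarith [h1, hxi, hn]
  have heq : n * (6 - y i) = 12 * x i := by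
    have : y i ≤ 6 := by omega
    rw [Nat.mul_sub, Nat.sub_eq_iff_eq_add (by nlinarith)]
    omega
  refine ⟨⟨i, hxi, hy5, heq⟩, ?_⟩
  set t := y i with ht
  interval_cases t <;> omega
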